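/- Let G be a bull-free graph with no K_4 subgraph, and let Q = v_1 v_2 ... v_p v_1 be a smallest induced odd cycle in G of length p ≥ 5. If C_i ≠ ∅ for some index i, then C_{i+1} = ∅ and C_{i-1} = ∅. -/
import Mathlib


/-- `H` is contained in `G` as an induced subgraph. -/
def ContainsInduced {α β : Type*} (H : SimpleGraph α) (G : SimpleGraph β) : Prop :=
  ∃ f : α ↪ β, ∀ a b, G.Adj (f a) (f b) ↔ H.Adj a b

/-- The bull: a triangle `v2 v3 v4` with pendant edges `v1 v2` and `v4 v5`. -/
def bull : SimpleGraph (Fin 5) :=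
  SimpleGraph.fromRel (fun a b =>
    ((a : ℕ), (b : ℕ)) ∈ [(0, 1), (1, 2), (2, 3), (3, 4), (1, 3)])

/-- `u : ZMod k → V` lists the vertices (in cyclic order) of an induced cycle of
length `k` in `G`. -/
def IsInducedCycle {V : Type*} (G : SimpleGraph V) {k : ℕ} (u : ZMod k → V) : Prop :=
  Function.Injective u ∧ ∀ i j : ZMod k, G.Adj (u i) (u j) ↔ (j = i + 1 ∨ i = j + 1)

/-- `v : ZMod p → V` is a smallest induced odd cycle of `G` of length `p ≥ 5`:
an induced odd cycle of length `p ≥ 5` such that `G` has no induced odd cycle of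
length `k` with `5 ≤ k < p`. -/
def IsSmallestInducedOddCycle {V : Type*} (G : SimpleGraph V) {p : ℕ}
    (v : ZMod p → V) : Prop :=
  5 ≤ p ∧ Odd p ∧ IsInducedCycle G v ∧
    ∀ k : ℕ, 5 ≤ k → k < p → Odd k → ∀ u : ZMod k → V, ¬ IsInducedCycle G u

/-- `A_i`: the vertices outside the cycle `Q` whose neighbourhood on `Q` is
exactly `{v_i}`. -/
def setA {V : Type*} (G : SimpleGraph V) {p : ℕ} (v : ZMod p → V) (i : ZMod p) :
    Set V :=
  {w | w ∉ Set.range v ∧ ∀ j : ZMod p, G.Adj w (v j) ↔ j = i}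

/-- `B_i`: the vertices outside the cycle `Q` whose neighbourhood on `Q` is
exactly `{v_i, v_{i+2}}`. -/
def setB {V : Type*} (G : SimpleGraph V) {p : ℕ} (v : ZMod p → V) (i : ZMod p) :
    Set V :=
  {w | w ∉ Set.range v ∧ ∀ j : ZMod p, G.Adj w (v j) ↔ (j = i ∨ j = i + 2)}

/-- `C_i`: the vertices outside the cycle `Q` whose neighbourhood on `Q` is
exactly `{v_i, v_{i+1}, v_{i+2}}`. -/
def setC {V : Type*} (G : SimpleGraph V) {p : ℕ} (v : ZMod p → V) (i : ZMod p) :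
    Set V :=
  {w | w ∉ Set.range v ∧ ∀ j : ZMod p, G.Adj w (v j) ↔ (j = i ∨ j = i + 1 ∨ j = i + 2)}

/-- `D_i`: the vertices outside the cycle `Q` whose neighbourhood on `Q` is
exactly `{v_i, v_{i+1}, v_{i+2}, v_{i+3}}`. -/
def setD {V : Type*} (G : SimpleGraph V) {p : ℕ} (v : ZMod p → V) (i : ZMod p) :
    Set V :=
  {w | w ∉ Set.range v ∧
    ∀ j : ZMod p, G.Adj w (v j) ↔ (j = i ∨ j = i + 1 ∨ j = i + 2 ∨ j = i + 3)}

lemma zmod_cast_ne {p : ℕ} (hp : 5 ≤ p) {a b : ℕ} (ha : a < 5) (hb : b < 5) (hab : a ≠ b) :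
    (a : ZMod p) ≠ (b : ZMod p) := by
  haveI : NeZero p := ⟨by omega⟩
  intro h
  have := congrArg ZMod.val h
  rw [ZMod.val_cast_of_lt (by omega), ZMod.val_cast_of_lt (by omega)] at this
  exact hab this

lemma bull_adj (a b : Fin 5) : bull.Adj a b ↔
    (a,b) ∈ [((0:Fin 5),(1:Fin 5)),(1,0),(1,2),(2,1),(2,3),(3,2),(3,4),(4,3),(1,3),(3,1)] := by
  rw [bull, SimpleGraph.fromRel_adj]
  fin_cases a <;> fin_cases b <;> decide


set_option maxHeartbeats 1000000 in
lemma bull_embed {V : Type*} (G : SimpleGraph V) (c d e f g : V)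
    (h01 : G.Adj c d) (h12 : G.Adj d e) (h23 : G.Adj e f) (h34 : G.Adj f g) (h13 : G.Adj d f)
    (n02 : ¬G.Adj c e) (n03 : ¬G.Adj c f) (n04 : ¬G.Adj c g) (n14 : ¬G.Adj d g)
    (n24 : ¬G.Adj e g)
    (m02 : c ≠ e) (m03 : c ≠ f) (m04 : c ≠ g) (m14 : d ≠ g) (m24 : e ≠ g) :
    ContainsInduced bull G := by
  have m01 : c ≠ d := h01.ne
  have m12 : d ≠ e := h12.ne
  have m23 : e ≠ f := h23.ne
  have m34 : f ≠ g := h34.ne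
  have m13 : d ≠ f := h13.ne
  refine ⟨⟨![c, d, e, f, g], ?_⟩, ?_⟩
  · intro a b hab
    fin_cases a <;> fin_cases b <;>
      simp only [Matrix.cons_val_zero, Matrix.cons_val_one, Matrix.head_cons,
        Matrix.cons_val_two, Matrix.tail_cons, Matrix.cons_val_three, Matrix.cons_val_four,
        Matrix.cons_val_fin_one, Matrix.head_fin_const] at hab <;>
      first
        | rfl
        | exact absurd hab m01 | exact absurd hab m01.symm
        | exact absurd hab m02 | exact absurd hab m02.symm
        | exact absurd hab m03 | exact absurd hab m03.symm
        | exact absurd hab m04 | exact absurd hab m04.symm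
        | exact absurd hab m12 | exact absurd hab m12.symm
        | exact absurd hab m13 | exact absurd hab m13.symm
        | exact absurd hab m14 | exact absurd hab m14.symm
        | exact absurd hab m23 | exact absurd hab m23.symm
        | exact absurd hab m24 | exact absurd hab m24.symm
        | exact absurd hab m34 | exact absurd hab m34.symm
  · intro a b
    fin_cases a <;> fin_cases b <;>
      rw [bull_adj] <;>
      simp only [Matrix.cons_val_zero, Matrix.cons_val_one, Matrix.head_cons,
        Matrix.cons_val_two, Matrix.tail_cons, Matrix.cons_val_three, Matrix.cons_val_four,
        Matrix.cons_val_fin_one, Matrix.head_fin_const] <;>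
      first
        | exact iff_of_false (G.irrefl) (by decide)
        | exact iff_of_true h01 (by decide)
        | exact iff_of_true h01.symm (by decide)
        | exact iff_of_true h12 (by decide)
        | exact iff_of_true h12.symm (by decide)
        | exact iff_of_true h23 (by decide)
        | exact iff_of_true h23.symm (by decide)
        | exact iff_of_true h34 (by decide)
        | exact iff_of_true h34.symm (by decide)
        | exact iff_of_true h13 (by decide)
        | exact iff_of_true h13.symm (by decide)
        | exact iff_of_false n02 (by decide)
        | exact iff_of_false (fun h => n02 h.symm) (by decide)
        | exact iff_of_false n03 (by decide)
        | exact iff_of_false (fun h => n03 h.symm) (by decide)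
        | exact iff_of_false n04 (by decide)
        | exact iff_of_false (fun h => n04 h.symm) (by decide)
        | exact iff_of_false n14 (by decide)
        | exact iff_of_false (fun h => n14 h.symm) (by decide)
        | exact iff_of_false n24 (by decide)
        | exact iff_of_false (fun h => n24 h.symm) (by decide)



lemma key {V : Type*} [Fintype V] (G : SimpleGraph V)
    (hbull : ¬ ContainsInduced bull G) (hK4 : G.CliqueFree 4)
    {p : ℕ} (v : ZMod p → V) (hQ : IsSmallestInducedOddCycle G v)
    (i : ZMod p) (hC : (setC G v i).Nonempty) : setC G v (i + 1) = ∅ := by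
  classical
  obtain ⟨hp, -, ⟨hinj, hadj⟩, -⟩ := hQ
  obtain ⟨x, hxr, hxadj⟩ := hC
  rw [Set.eq_empty_iff_forall_notMem]
  rintro y ⟨hyr, hyadj⟩
  have d24 : (i + 2 : ZMod p) ≠ i + 4 := fun h => zmod_cast_ne hp (by norm_num)
    (by norm_num) (by norm_num : (2:ℕ) ≠ 4) (by push_cast; linear_combination h)
  -- adjacency facts
  have hx0 : G.Adj x (v i) := (hxadj i).2 (Or.inl rfl)
  have hx1 : G.Adj x (v (i+1)) := (hxadj _).2 (Or.inr (Or.inl rfl))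
  have hx2 : G.Adj x (v (i+2)) := (hxadj _).2 (Or.inr (Or.inr rfl))
  have hy1 : G.Adj y (v (i+1)) := (hyadj _).2 (Or.inl rfl)
  have hy2 : G.Adj y (v (i+2)) := (hyadj _).2 (Or.inr (Or.inl (by ring)))
  have hy3 : G.Adj y (v (i+3)) := (hyadj _).2 (Or.inr (Or.inr (by ring)))
  have hv12 : G.Adj (v (i+1)) (v (i+2)) := (hadj _ _).2 (Or.inl (by ring))
  have hv23 : G.Adj (v (i+2)) (v (i+3)) := (hadj _ _).2 (Or.inl (by ring))
  have hv34 : G.Adj (v (i+3)) (v (i+4)) := (hadj _ _).2 (Or.inl (by ring))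
  -- non-adjacency facts
  have nx3 : ¬ G.Adj x (v (i+3)) := by
    rw [hxadj]
    rintro (h|h|h)
    · exact zmod_cast_ne hp (by norm_num) (by norm_num) (by norm_num : (3:ℕ) ≠ 0)
        (by push_cast; linear_combination h)
    · exact zmod_cast_ne hp (by norm_num) (by norm_num) (by norm_num : (3:ℕ) ≠ 1)
        (by push_cast; linear_combination h)
    · exact zmod_cast_ne hp (by norm_num) (by norm_num) (by norm_num : (3:ℕ) ≠ 2)
        (by push_cast; linear_combination h)
  have nx4 : ¬ G.Adj x (v (i+4)) := by
    rw [hxadj]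
    rintro (h|h|h)
    · exact zmod_cast_ne hp (by norm_num) (by norm_num) (by norm_num : (4:ℕ) ≠ 0)
        (by push_cast; linear_combination h)
    · exact zmod_cast_ne hp (by norm_num) (by norm_num) (by norm_num : (4:ℕ) ≠ 1)
        (by push_cast; linear_combination h)
    · exact zmod_cast_ne hp (by norm_num) (by norm_num) (by norm_num : (4:ℕ) ≠ 2)
        (by push_cast; linear_combination h)
  have ny4 : ¬ G.Adj y (v (i+4)) := by
    rw [hyadj]
    rintro (h|h|h)
    · exact zmod_cast_ne hp (by norm_num) (by norm_num) (by norm_num : (4:ℕ) ≠ 1)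
        (by push_cast; linear_combination h)
    · exact zmod_cast_ne hp (by norm_num) (by norm_num) (by norm_num : (4:ℕ) ≠ 2)
        (by push_cast; linear_combination h)
    · exact zmod_cast_ne hp (by norm_num) (by norm_num) (by norm_num : (4:ℕ) ≠ 3)
        (by push_cast; linear_combination h)
  have nv24 : ¬ G.Adj (v (i+2)) (v (i+4)) := by
    rw [hadj]
    rintro (h|h)
    · exact zmod_cast_ne hp (by norm_num) (by norm_num) (by norm_num : (4:ℕ) ≠ 3)
        (by push_cast; linear_combination h)
    · exact zmod_cast_ne hp (by norm_num) (by norm_num) (by norm_num : (3:ℕ) ≠ 0)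
        (by push_cast; linear_combination -h)
  by_cases hxy : G.Adj x y
  · -- K4 on {x, y, v(i+1), v(i+2)}
    apply hK4 {x, y, v (i+1), v (i+2)}
    have hne1 : x ≠ y := hxy.ne
    have hne2 : x ≠ v (i+1) := hx1.ne
    have hne3 : x ≠ v (i+2) := hx2.ne
    have hne4 : y ≠ v (i+1) := hy1.ne
    have hne5 : y ≠ v (i+2) := hy2.ne
    have hne6 : v (i+1) ≠ v (i+2) := hv12.ne
    constructor
    · intro a ha b hb hab
      simp only [Finset.coe_insert, Set.mem_insert_iff, Finset.coe_singleton,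
        Set.mem_singleton_iff] at ha hb
      rcases ha with rfl|rfl|rfl|rfl <;> rcases hb with rfl|rfl|rfl|rfl <;>
        first
          | exact absurd rfl hab
          | assumption
          | exact hxy.symm
          | exact hx1.symm
          | exact hx2.symm
          | exact hy1.symm
          | exact hy2.symm
          | exact hv12.symm
    · rw [Finset.card_insert_of_notMem (by simp [hne1, hne2, hne3]),
        Finset.card_insert_of_notMem (by simp [hne4, hne5]),
        Finset.card_insert_of_notMem (by simp [hne6]), Finset.card_singleton]
  · -- bull on x, v(i+2), y, v(i+3), v(i+4)
    apply hbull
    have nxv : ∀ j : ZMod p, x ≠ v j := fun j h => hxr ⟨j, h.symm⟩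
    have nyv : ∀ j : ZMod p, y ≠ v j := fun j h => hyr ⟨j, h.symm⟩
    have hxy' : x ≠ y := fun h => nx3 (h ▸ hy3)
    have e24 : v (i+2) ≠ v (i+4) := fun h => d24 (hinj h)
    exact bull_embed G x (v (i+2)) y (v (i+3)) (v (i+4)) hx2 hy2.symm hy3 hv34 hv23
      hxy nx3 nx4 nv24 ny4 hxy' (nxv _) (nxv _) e24 (nyv _)


/-- Let `G` be a bull-free graph with no `K_4` subgraph, and let `Q` be a smallest
induced odd cycle of `G` of length `p ≥ 5`.  If `C_i ≠ ∅` for some index `i`, then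
`C_{i+1} = ∅` and `C_{i-1} = ∅`. -/
theorem setC_nonempty_imp_nbrs_empty {V : Type*} [Fintype V] (G : SimpleGraph V)
    (hbull : ¬ ContainsInduced bull G) (hK4 : G.CliqueFree 4)
    {p : ℕ} (v : ZMod p → V) (hQ : IsSmallestInducedOddCycle G v)
    (i : ZMod p) (hC : (setC G v i).Nonempty) :
    setC G v (i + 1) = ∅ ∧ setC G v (i - 1) = ∅ := by
  refine ⟨key G hbull hK4 v hQ i hC, ?_⟩
  by_contra h
  have h' : (setC G v (i - 1)).Nonempty := Set.nonempty_iff_ne_empty.mpr h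
  have := key G hbull hK4 v hQ (i - 1) h'
  rw [sub_add_cancel] at this
  exact Set.not_nonempty_empty (this ▸ hC)
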